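/- Let (N, φ) be a Dieudonné K-module over k and let W ⊆ N be a 𝒦-subspace with φ(W) ⊆ W. Then there exists a 𝒦-subspace W′ ⊆ N with φ(W′) ⊆ W′ and N = W ⊕ W′. (In other words, the category of Dieudonné K-modules over k is semisimple.) -/

import Mathlib

/- STATEMENT 1: Let (N, φ) be a Dieudonné K-module over k and let W ⊆ N be a 𝒦-subspace with
φ(W) ⊆ W. Then there exists a 𝒦-subspace W′ ⊆ N with φ(W′) ⊆ W′ and N = W ⊕ W′.
(The category of Dieudonné K-modules over k is semisimple.) -/

noncomputable section

set_option maxHeartbeats 1000000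
set_option synthInstance.maxHeartbeats 1000000

section Aux
variable {k : Type*} [Field k]

open HahnSeries Finset in
lemma hs_mul_coeff_lowbound (x y : HahnSeries ℤ k) (m n : ℤ)
    (hx : ∀ r < m, x.coeff r = 0) (hy : ∀ s < n, y.coeff s = 0) :
    (x * y).coeff (m + n) = x.coeff m * y.coeff n := by
  rw [HahnSeries.coeff_mul]
  apply Finset.sum_eq_single (m, n)
  · rintro ⟨r, s⟩ hmem hne
    rw [Finset.mem_addAntidiagonal] at hmem
    obtain ⟨h1, h2, h3⟩ := hmem
    rcases lt_or_ge r m with h | h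
    · rw [hx r h, zero_mul]
    rcases lt_or_ge s n with h' | h'
    · rw [hy s h', mul_zero]
    exfalso
    have : r = m := by omega
    have : s = n := by omega
    exact hne (by simp_all)
  · intro hnot
    rw [Finset.mem_addAntidiagonal] at hnot
    push_neg at hnot
    by_cases h1 : x.coeff m = 0
    · rw [h1, zero_mul]
    by_cases h2 : y.coeff n = 0
    · rw [h2, mul_zero]
    exact absurd rfl (hnot h1 h2)

open HahnSeries Finset in
lemma hs_mul_coeff_zero_of_lt (x y : HahnSeries ℤ k) (m n d : ℤ)
    (hx : ∀ r < m, x.coeff r = 0) (hy : ∀ s < n, y.coeff s = 0) (hd : d < m + n) :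
    (x * y).coeff d = 0 := by
  rw [HahnSeries.coeff_mul]
  apply Finset.sum_eq_zero
  rintro ⟨r, s⟩ hmem
  rw [Finset.mem_addAntidiagonal] at hmem
  obtain ⟨h1, h2, h3⟩ := hmem
  rcases lt_or_ge r m with h | h
  · rw [hx r h, zero_mul]
  · rw [hy s (by omega), mul_zero]

lemma hs_sum_coeff {ι : Type*} (s : Finset ι)
    (f : ι → HahnSeries ℤ k) (n : ℤ) :
    (∑ j ∈ s, f j).coeff n = ∑ j ∈ s, (f j).coeff n := by
  classical
  induction s using Finset.cons_induction with
  | empty => simp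
  | cons a s ha ih => rw [Finset.sum_cons, Finset.sum_cons, HahnSeries.coeff_add, ih]

open Classical in
lemma exists_mprime (d : ℕ) (A : Fin d → LaurentSeries k) :
    ∃ m' : ℤ, m' ≤ 0 ∧ (∀ (j : Fin d) (r : ℤ), r < m' → (A j).coeff r = 0) ∧
      (m' < 0 → ∃ j, (A j).coeff m' ≠ 0) := by
  by_cases hP : ∃ r : ℤ, r < 0 ∧ ∃ j, (A j).coeff r ≠ 0
  · obtain ⟨r₀, hr₀⟩ := hP
    have hbdd : ∃ b : ℤ, ∀ z : ℤ, (z < 0 ∧ ∃ j, (A j).coeff z ≠ 0) → b ≤ z := by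
      obtain ⟨j₀, _⟩ := hr₀.2
      refine ⟨Finset.univ.inf' ⟨j₀, Finset.mem_univ _⟩ (fun j => (A j).order), ?_⟩
      rintro z ⟨_, j, hj⟩
      refine le_trans (Finset.inf'_le _ (Finset.mem_univ j)) ?_
      by_contra h
      exact hj (HahnSeries.coeff_eq_zero_of_lt_order (lt_of_not_ge h))
    obtain ⟨lb, ⟨hlb1, hlb2⟩, hleast⟩ := Int.exists_least_of_bdd hbdd ⟨r₀, hr₀⟩
    refine ⟨lb, le_of_lt hlb1, ?_, fun _ => hlb2⟩
    intro j r hr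
    by_contra h
    exact absurd (hleast r ⟨hr.trans hlb1, j, h⟩) (not_le.mpr hr)
  · push_neg at hP
    exact ⟨0, le_refl _, fun j r hr => hP r hr j, fun h => absurd h (lt_irrefl 0).elim⟩

open Polynomial in
lemma additive_poly_surj [IsAlgClosed k] (q : ℕ) (hq : 2 ≤ q)
    (d : ℕ) (b : Fin d → k) (lin : k) (h : lin ≠ 0 ∨ ∃ j, b j ≠ 0) (c : k) :
    ∃ t : k, (∑ j : Fin d, b j * t ^ q ^ ((j : ℕ) + 1)) + lin * t = c := by
  set P : Polynomial k := (∑ j : Fin d, C (b j) * X ^ q ^ ((j : ℕ) + 1)) + C lin * X - C c with hP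
  have hq1 : ∀ j : Fin d, 2 ≤ q ^ ((j : ℕ) + 1) := by
    intro j
    calc 2 ≤ q := hq
    _ = q ^ 1 := (pow_one q).symm
    _ ≤ q ^ ((j : ℕ) + 1) := Nat.pow_le_pow_right (by omega) (by omega)
  have hdeg : P.degree ≠ 0 := by
    have key : ∃ n, 1 ≤ n ∧ P.coeff n ≠ 0 := by
      rcases h with h | ⟨j₀, hj₀⟩
      · refine ⟨1, le_refl _, ?_⟩
        have : P.coeff 1 = lin := by
          simp only [hP, coeff_sub, coeff_add, finset_sum_coeff, coeff_C_mul, coeff_X_pow,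
            coeff_X_one, coeff_C]
          rw [Finset.sum_eq_zero]
          · simp
          · intro j _
            have := hq1 j
            rw [if_neg (by omega)]
            ring
        rw [this]; exact h
      · refine ⟨q ^ ((j₀ : ℕ) + 1), by have := hq1 j₀; omega, ?_⟩
        have : P.coeff (q ^ ((j₀ : ℕ) + 1)) = b j₀ := by
          simp only [hP, coeff_sub, coeff_add, finset_sum_coeff, coeff_C_mul, coeff_X_pow,
            coeff_X, coeff_C]
          have h2 := hq1 j₀
          rw [if_neg (by omega), if_neg (by omega), Finset.sum_eq_single j₀]
          · simp
          · intro j _ hne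
            rw [if_neg, mul_zero]
            intro hEq
            exact hne (Fin.ext (by
              have := Nat.pow_right_injective hq hEq
              omega))
          · intro hj; exact absurd (Finset.mem_univ j₀) hj
        rw [this]; exact hj₀
    obtain ⟨n, hn1, hn⟩ := key
    intro hd0
    have : P.natDegree = 0 := natDegree_eq_zero_iff_degree_le_zero.mpr (le_of_eq hd0)
    have := Polynomial.le_natDegree_of_ne_zero hn
    omega
  obtain ⟨t, ht⟩ := IsAlgClosed.exists_root P hdeg
  refine ⟨t, ?_⟩
  have := ht
  rw [IsRoot, hP] at this
  simp only [eval_sub, eval_add, eval_mul, eval_C, eval_X, eval_pow, eval_finset_sum] at this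
  have h2 : (∑ j : Fin d, b j * t ^ q ^ ((j : ℕ) + 1)) + lin * t - c = 0 := by
    convert this using 2
  exact eq_of_sub_eq_zero h2

open HahnSeries in
lemma key_scalar [IsAlgClosed k] (q : ℕ) (hq : 2 ≤ q)
    (σ : LaurentSeries k ≃+* LaurentSeries k)
    (hσ : ∀ (x : LaurentSeries k) (n : ℤ), (σ x).coeff n = x.coeff n ^ q)
    (d : ℕ) (A : Fin d → LaurentSeries k) (u : LaurentSeries k) :
    ∃ y : LaurentSeries k, (∑ j : Fin d, A j * (⇑σ)^[(j : ℕ) + 1] y) - y = u := by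
  classical
  have hqpos : ∀ m : ℕ, q ^ m ≠ 0 := fun m => pow_ne_zero m (by omega)
  have hiter : ∀ (m : ℕ) (x : LaurentSeries k) (n : ℤ),
      ((⇑σ)^[m] x).coeff n = x.coeff n ^ q ^ m := by
    intro m
    induction m with
    | zero => intro x n; simp
    | succ m ih =>
      intro x n
      rw [Function.iterate_succ_apply', hσ, ih, ← pow_mul, pow_succ]
  have hiter0 : ∀ m : ℕ, (⇑σ)^[m] (0 : LaurentSeries k) = 0 :=
    fun m => Function.iterate_fixed (map_zero σ) m
  have hiteradd : ∀ (m : ℕ) (a b : LaurentSeries k),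
      (⇑σ)^[m] (a + b) = (⇑σ)^[m] a + (⇑σ)^[m] b := by
    intro m
    induction m with
    | zero => intro a b; simp
    | succ m ih =>
      intro a b
      rw [Function.iterate_succ_apply', Function.iterate_succ_apply',
        Function.iterate_succ_apply', ih, map_add]
  rcases eq_or_ne u 0 with hu | hu
  · refine ⟨0, ?_⟩
    simp [hiter0, hu]
  obtain ⟨m', hm0, hm2, hm3⟩ := exists_mprime d A
  set n₀ : ℤ := u.order - m' with hn₀
  set lin : k := if m' = 0 then (-1 : k) else 0 with hlin
  have hQsurj : ∀ c : k, ∃ t : k,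
      (∑ j : Fin d, (A j).coeff m' * t ^ q ^ ((j : ℕ) + 1)) + lin * t = c := by
    apply additive_poly_surj q hq d _ lin
    rcases lt_or_eq_of_le hm0 with hneg | h0
    · right; exact hm3 hneg
    · left; rw [hlin, if_pos h0]; norm_num
  choose tf htf using hQsurj
  -- error functional, kept opaque
  obtain ⟨E, hE⟩ : ∃ E : LaurentSeries k → LaurentSeries k,
      ∀ w, E w = (∑ j : Fin d, A j * (⇑σ)^[(j : ℕ) + 1] w) - w - u :=
    ⟨_, fun w => rfl⟩
  obtain ⟨Y, hY0, hYs'⟩ : ∃ Y : ℕ → LaurentSeries k, Y 0 = 0 ∧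
      ∀ i : ℕ, Y (i + 1) = Y i + HahnSeries.single (n₀ + i)
        (tf (-(E (Y i)).coeff (n₀ + m' + i))) :=
    ⟨fun i => Nat.rec 0 (fun i Yi => Yi + HahnSeries.single (n₀ + i)
        (tf (-(E Yi).coeff (n₀ + m' + i)))) i, rfl, fun i => rfl⟩
  obtain ⟨z, hzd⟩ : ∃ z : ℕ → k,
      ∀ i : ℕ, z i = tf (-(E (Y i)).coeff (n₀ + m' + i)) := ⟨_, fun i => rfl⟩
  have hYs : ∀ i : ℕ, Y (i + 1) = Y i + HahnSeries.single (n₀ + i) (z i) := by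
    intro i; rw [hYs' i, hzd i]
  have hzQ : ∀ i : ℕ,
      (∑ j : Fin d, (A j).coeff m' * (z i) ^ q ^ ((j : ℕ) + 1)) + lin * z i
        = -(E (Y i)).coeff (n₀ + m' + i) := by
    intro i; rw [hzd i]; exact htf _
  -- coefficients of Y i
  have hYcoeff : ∀ (i : ℕ) (n : ℤ),
      (Y i).coeff n = if n₀ ≤ n ∧ n < n₀ + i then z ((n - n₀).toNat) else 0 := by
    intro i
    induction i with
    | zero =>
      intro n
      rw [if_neg (by omega), hY0]
      simp
    | succ i ih =>
      intro n
      rw [hYs i, HahnSeries.coeff_add, ih n, HahnSeries.coeff_single]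
      by_cases hn : n = n₀ + i
      · rw [if_pos hn, if_neg (by omega), if_pos (by omega), hn]
        have : ((n₀ + (i : ℤ)) - n₀).toNat = i := by omega
        rw [this, zero_add]
      · rw [if_neg hn]
        by_cases h2 : n₀ ≤ n ∧ n < n₀ + i
        · rw [if_pos h2, if_pos (by push_cast at h2 ⊢; omega), add_zero]
        · rw [if_neg h2, if_neg (by push_cast at h2 ⊢; omega), add_zero]
  -- the solution y
  set yc : ℤ → k := fun n => if n₀ ≤ n then z ((n - n₀).toNat) else 0 with hyc
  have hbdd : BddBelow (Function.support yc) :=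
    HahnSeries.forallLTEqZero_supp_BddBelow yc n₀ (fun m hm => if_neg (not_le.mpr hm))
  obtain ⟨y, hycoeff⟩ : ∃ y : LaurentSeries k,
      ∀ n : ℤ, y.coeff n = if n₀ ≤ n then z ((n - n₀).toNat) else 0 :=
    ⟨HahnSeries.ofSuppBddBelow yc hbdd, fun n => rfl⟩
  -- tail facts
  have hyY : ∀ (i : ℕ) (n : ℤ), n < n₀ + i → (y - Y i).coeff n = 0 := by
    intro i n hn
    rw [HahnSeries.coeff_sub, hycoeff n, hYcoeff i n]
    by_cases h : n₀ ≤ n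
    · rw [if_pos h, if_pos ⟨h, hn⟩, sub_self]
    · rw [if_neg h, if_neg (by omega), sub_self]
  have hyYtop : ∀ i : ℕ, (y - Y i).coeff (n₀ + i) = z i := by
    intro i
    rw [HahnSeries.coeff_sub, hycoeff _, hYcoeff i _, if_pos (by omega), if_neg (by omega)]
    have : ((n₀ + (i : ℤ)) - n₀).toNat = i := by omega
    rw [this, sub_zero]
  -- splitting of E
  have hEsplit : ∀ w T : LaurentSeries k,
      E (w + T) = E w + ((∑ j : Fin d, A j * (⇑σ)^[(j : ℕ) + 1] T) - T) := by
    intro w T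
    rw [hE, hE]
    simp only [hiteradd]
    rw [show (∑ j : Fin d, A j * ((⇑σ)^[(j : ℕ) + 1] w + (⇑σ)^[(j : ℕ) + 1] T))
        = (∑ j : Fin d, A j * (⇑σ)^[(j : ℕ) + 1] w)
          + (∑ j : Fin d, A j * (⇑σ)^[(j : ℕ) + 1] T) by
      rw [← Finset.sum_add_distrib]
      congr 1; funext j; ring]
    ring
  -- main computation : E y = 0
  have hmain : ∀ D : ℤ, (E y).coeff D = 0 := by
    intro D
    by_cases hD : D < n₀ + m'
    · have h1 : ∀ j : Fin d, (A j * (⇑σ)^[(j : ℕ) + 1] y).coeff D = 0 := by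
        intro j
        refine hs_mul_coeff_zero_of_lt _ _ m' n₀ D (hm2 j) ?_ (by omega)
        intro s hs
        rw [hiter, hycoeff, if_neg (not_le.mpr hs), zero_pow (hqpos _)]
      rw [hE]
      rw [HahnSeries.coeff_sub, HahnSeries.coeff_sub, hs_sum_coeff]
      rw [Finset.sum_eq_zero (fun j _ => h1 j)]
      have hy0 : y.coeff D = 0 := by rw [hycoeff, if_neg (by omega)]
      have hu0 : u.coeff D = 0 :=
        HahnSeries.coeff_eq_zero_of_lt_order (by omega)
      rw [hy0, hu0]; ring
    · push_neg at hD
      set i : ℕ := (D - n₀ - m').toNat with hi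
      have hDi : D = n₀ + m' + i := by omega
      have hsplit := hEsplit (Y i) (y - Y i)
      rw [show Y i + (y - Y i) = y by ring] at hsplit
      have eq1 : (E y).coeff D = (E (Y i)).coeff D
          + ((∑ j : Fin d, (A j * (⇑σ)^[(j : ℕ) + 1] (y - Y i)).coeff D)
            - (y - Y i).coeff D) := by
        rw [hsplit, HahnSeries.coeff_add, HahnSeries.coeff_sub, hs_sum_coeff]
      have hprod : ∀ j : Fin d,
          (A j * (⇑σ)^[(j : ℕ) + 1] (y - Y i)).coeff D
            = (A j).coeff m' * (z i) ^ q ^ ((j : ℕ) + 1) := by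
        intro j
        have hlow := hs_mul_coeff_lowbound (A j) ((⇑σ)^[(j : ℕ) + 1] (y - Y i)) m' (n₀ + i)
          (hm2 j)
          (fun s hs => by rw [hiter, hyY i s hs, zero_pow (hqpos _)])
        rw [hDi, show n₀ + m' + (i : ℤ) = m' + (n₀ + i) by ring, hlow, hiter, hyYtop i]
      have hT : (y - Y i).coeff D = -(lin * z i) := by
        rw [hlin]
        by_cases h0 : m' = 0
        · rw [if_pos h0, hDi, h0, add_zero, hyYtop i]; ring
        · rw [if_neg h0, hyY i D (by omega)]; ring
      rw [Finset.sum_congr rfl (fun j _ => hprod j), hT] at eq1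
      have eq2 := hzQ i
      rw [← hDi] at eq2
      linear_combination eq1 + eq2
  refine ⟨y, ?_⟩
  have h0 : E y = 0 := by
    apply HahnSeries.coeff_injective
    funext D
    rw [hmain D, HahnSeries.coeff_zero]
  rw [hE] at h0
  linear_combination h0

open HahnSeries in
lemma psi_sub_one_surj [IsAlgClosed k] (q : ℕ) (hq : 2 ≤ q)
    (σ : LaurentSeries k ≃+* LaurentSeries k)
    (hσ : ∀ (x : LaurentSeries k) (n : ℤ), (σ x).coeff n = x.coeff n ^ q)
    (V : Type*) [AddCommGroup V] [Module (LaurentSeries k) V]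
    [FiniteDimensional (LaurentSeries k) V]
    (ψ : V → V)
    (hψadd : ∀ x y, ψ (x + y) = ψ x + ψ y)
    (hψsmul : ∀ (c : LaurentSeries k) (v : V), ψ (c • v) = σ c • ψ v)
    (a : V) : ∃ x : V, ψ x - x = a := by
  classical
  have hψ0 : ψ 0 = 0 := by
    have := hψadd 0 0
    rw [add_zero] at this
    exact left_eq_add.mp this
  rcases eq_or_ne a 0 with ha | ha
  · exact ⟨0, by rw [hψ0, ha, sub_zero]⟩
  have hitadd : ∀ (n : ℕ) (x y : V), ψ^[n] (x + y) = ψ^[n] x + ψ^[n] y := by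
    intro n
    induction n with
    | zero => intro x y; simp
    | succ n ih =>
      intro x y
      rw [Function.iterate_succ_apply', Function.iterate_succ_apply',
        Function.iterate_succ_apply', ih, hψadd]
  have hit0 : ∀ n : ℕ, ψ^[n] (0 : V) = 0 := fun n => Function.iterate_fixed hψ0 n
  have hitsmul : ∀ (n : ℕ) (c : LaurentSeries k) (v : V),
      ψ^[n] (c • v) = (⇑σ)^[n] c • ψ^[n] v := by
    intro n
    induction n with
    | zero => intro c v; simp
    | succ n ih =>
      intro c v
      rw [Function.iterate_succ_apply', Function.iterate_succ_apply',
        Function.iterate_succ_apply', ih, hψsmul]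
  have hsumψ : ∀ {ι : Type} (s : Finset ι) (f : ι → V), ψ (∑ i ∈ s, f i) = ∑ i ∈ s, ψ (f i) := by
    intro ι s f
    induction s using Finset.cons_induction with
    | empty => simpa using hψ0
    | cons b s hb ih => rw [Finset.sum_cons, Finset.sum_cons, hψadd, ih]
  -- find minimal d with ψ^[d] a ∈ span of previous iterates
  set P : ℕ → Prop := fun n =>
    ψ^[n] a ∈ Submodule.span (LaurentSeries k) (Set.range fun i : Fin n => ψ^[(i : ℕ)] a)
    with hPdef
  have hex : ∃ n, P n := by
    by_contra hnot
    push_neg at hnot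
    set U : ℕ → Submodule (LaurentSeries k) V := fun n =>
      Submodule.span (LaurentSeries k) (Set.range fun i : Fin n => ψ^[(i : ℕ)] a) with hU
    have hmono : ∀ n, U n < U (n + 1) := by
      intro n
      constructor
      · apply Submodule.span_mono
        rintro _ ⟨i, rfl⟩
        exact ⟨⟨(i : ℕ), by omega⟩, rfl⟩
      · intro hle
        apply hnot n
        apply hle
        apply Submodule.subset_span
        exact ⟨⟨n, by omega⟩, rfl⟩
    have hrank : ∀ n, n ≤ Module.finrank (LaurentSeries k) (U n) := by
      intro n
      induction n with
      | zero => omega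
      | succ n ih =>
        have := Submodule.finrank_lt_finrank_of_lt (hmono n)
        omega
    have h1 := hrank (Module.finrank (LaurentSeries k) V + 1)
    have h2 := Submodule.finrank_le (U (Module.finrank (LaurentSeries k) V + 1))
    omega
  set d : ℕ := Nat.find hex with hd
  have hPd : P d := Nat.find_spec hex
  have hdpos : 0 < d := by
    rcases Nat.eq_zero_or_pos d with h0 | h
    · exfalso
      have := hPd
      rw [h0] at this
      simp only [hPdef] at this
      have hrange : (Set.range fun i : Fin 0 => ψ^[(i : ℕ)] a) = ∅ := by
        simp
      rw [hrange, Submodule.span_empty, Submodule.mem_bot] at this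
      simp only [Function.iterate_zero_apply] at this
      exact ha this
    · exact h
  obtain ⟨c, hc⟩ := (Submodule.mem_span_range_iff_exists_fun (LaurentSeries k)).mp hPd
  set c' : ℕ → LaurentSeries k := fun i => if h : i < d then c ⟨i, h⟩ else 0 with hc'
  -- solve the scalar equation
  obtain ⟨y, hy⟩ := key_scalar q hq σ hσ d
    (fun j : Fin d => (⇑σ)^[(j : ℕ)] (c' (d - 1 - (j : ℕ)))) 1
  -- build the coefficients X i
  obtain ⟨X, hX0, hXs⟩ : ∃ X : ℕ → LaurentSeries k,
      X 0 = c' 0 * σ y - 1 ∧ ∀ i : ℕ, X (i + 1) = σ (X i) + c' (i + 1) * σ y :=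
    ⟨fun i => Nat.rec (c' 0 * σ y - 1) (fun i Xi => σ Xi + c' (i + 1) * σ y) i,
      rfl, fun i => rfl⟩
  have hXcf : ∀ i : ℕ,
      X i = (∑ j ∈ Finset.range (i + 1), (⇑σ)^[j] (c' (i - j)) * (⇑σ)^[j + 1] y) - 1 := by
    intro i
    induction i with
    | zero =>
      rw [hX0]
      simp
    | succ i ih =>
      rw [hXs i, ih, map_sub, map_sum, map_one]
      have hterm : ∀ j ∈ Finset.range (i + 1),
          σ ((⇑σ)^[j] (c' (i - j)) * (⇑σ)^[j + 1] y)
            = (⇑σ)^[j + 1] (c' (i + 1 - (j + 1))) * (⇑σ)^[j + 1 + 1] y := by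
        intro j hj
        rw [map_mul, ← Function.iterate_succ_apply' σ, ← Function.iterate_succ_apply' σ]
        congr 3
        omega
      rw [Finset.sum_congr rfl hterm]
      rw [Finset.sum_range_succ' (fun j => (⇑σ)^[j] (c' (i + 1 - j)) * (⇑σ)^[j + 1] y) (i + 1)]
      have : (⇑σ)^[0] (c' (i + 1 - 0)) * (⇑σ)^[0 + 1] y = c' (i + 1) * σ y := by
        simp
      rw [this]
      ring
  have hXd : X (d - 1) = y := by
    rw [hXcf (d - 1)]
    have hd1 : d - 1 + 1 = d := by omega
    rw [hd1]
    have hsum : (∑ j ∈ Finset.range d, (⇑σ)^[j] (c' (d - 1 - j)) * (⇑σ)^[j + 1] y)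
        = ∑ j : Fin d, (⇑σ)^[(j : ℕ)] (c' (d - 1 - (j : ℕ))) * (⇑σ)^[(j : ℕ) + 1] y := by
      rw [Finset.sum_range fun j => (⇑σ)^[j] (c' (d - 1 - j)) * (⇑σ)^[j + 1] y]
    rw [hsum]
    linear_combination hy
  -- the solution
  refine ⟨∑ i ∈ Finset.range d, X i • ψ^[i] a, ?_⟩
  rw [hsumψ]
  have hterm : ∀ i ∈ Finset.range d, ψ (X i • ψ^[i] a) = σ (X i) • ψ^[i + 1] a := by
    intro i _
    rw [hψsmul, ← Function.iterate_succ_apply' ψ]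
  rw [Finset.sum_congr rfl hterm]
  have hdd : d = (d - 1) + 1 := by omega
  rw [hdd, Finset.sum_range_succ (fun i => σ (X i) • ψ^[i + 1] a) (d - 1), ← hdd]
  rw [hXd]
  have hψd : ψ^[d] a = ∑ i ∈ Finset.range d, c' i • ψ^[i] a := by
    rw [← hc, Finset.sum_range fun i => c' i • ψ^[i] a]
    apply Finset.sum_congr rfl
    intro i _
    congr 1
    simp [hc']
  rw [hψd, Finset.smul_sum]
  rw [show (∑ i ∈ Finset.range (d - 1), σ (X i) • ψ^[i + 1] a)
      = ∑ i ∈ Finset.range d, (if 1 ≤ i then σ (X (i - 1)) else 0) • ψ^[i] a by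
    rw [hdd, Finset.sum_range_succ' (fun i => (if 1 ≤ i then σ (X (i - 1)) else 0) • ψ^[i] a)
      (d - 1)]
    simp only [Nat.le_add_left 1, if_true, Nat.add_sub_cancel]
    simp]
  rw [← Finset.sum_add_distrib, ← Finset.sum_sub_distrib]
  have hcoef : ∀ i ∈ Finset.range d,
      ((if 1 ≤ i then σ (X (i - 1)) else 0) • ψ^[i] a + σ y • c' i • ψ^[i] a
        - X i • ψ^[i] a)
        = (if i = 0 then (1 : LaurentSeries k) else 0) • ψ^[i] a := by
    intro i hi
    rw [smul_smul, ← add_smul, ← sub_smul]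
    congr 1
    rcases Nat.eq_zero_or_pos i with h0 | h1
    · subst h0
      rw [if_neg (by omega), if_pos rfl, hX0]
      ring
    · rw [if_pos (by omega : 1 ≤ i), if_neg (by omega)]
      have : i = (i - 1) + 1 := by omega
      rw [this, hXs (i - 1), ← this]
      ring
  rw [Finset.sum_congr rfl hcoef]
  rw [Finset.sum_eq_single 0]
  · simp
  · intro i _ hne
    rw [if_neg hne, zero_smul]
  · intro h
    exact absurd (Finset.mem_range.mpr hdpos) h

def imgSubmodule {k : Type*} [Field k] {N : Type*} [AddCommGroup N]
    [Module (LaurentSeries k) N]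
    (σ : LaurentSeries k ≃+* LaurentSeries k) (φ : N → N)
    (hadd : ∀ x y, φ (x + y) = φ x + φ y)
    (hsmul : ∀ (c : LaurentSeries k) (v : N), φ (c • v) = σ c • φ v)
    (S : Submodule (LaurentSeries k) N) : Submodule (LaurentSeries k) N where
  carrier := φ '' S
  add_mem' := by
    rintro x y ⟨a, ha, rfl⟩ ⟨b, hb, rfl⟩
    exact ⟨a + b, S.add_mem ha hb, hadd a b⟩
  zero_mem' := by
    refine ⟨0, S.zero_mem, ?_⟩
    have h := hadd 0 0
    rw [add_zero] at h
    exact left_eq_add.mp h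
  smul_mem' := by
    rintro c x ⟨a, ha, rfl⟩
    exact ⟨σ.symm c • a, S.smul_mem _ ha, by rw [hsmul, RingEquiv.apply_symm_apply]⟩

lemma imgSubmodule_coe {k : Type*} [Field k] {N : Type*} [AddCommGroup N]
    [Module (LaurentSeries k) N]
    (σ : LaurentSeries k ≃+* LaurentSeries k) (φ : N → N)
    (hadd : ∀ x y, φ (x + y) = φ x + φ y)
    (hsmul : ∀ (c : LaurentSeries k) (v : N), φ (c • v) = σ c • φ v)
    (S : Submodule (LaurentSeries k) N) :
    (imgSubmodule σ φ hadd hsmul S : Set N) = φ '' S := rfl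
end Aux

theorem dieudonne_semisimple
    (p e : ℕ) [Fact p.Prime] (he : 0 < e)
    (k : Type*) [Field k] [IsAlgClosed k] [CharP k p]
    (σ : LaurentSeries k ≃+* LaurentSeries k)
    (hσ : ∀ (x : LaurentSeries k) (n : ℤ), (σ x).coeff n = x.coeff n ^ p ^ e)
    (N : Type*) [AddCommGroup N] [Module (LaurentSeries k) N]
    [FiniteDimensional (LaurentSeries k) N]
    (φ : N → N)
    (hadd : ∀ x y, φ (x + y) = φ x + φ y)
    (hsmul : ∀ (a : LaurentSeries k) (v : N), φ (a • v) = σ a • φ v)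
    (hbij : Function.Bijective φ)
    (W : Submodule (LaurentSeries k) N) (hW : ∀ w ∈ W, φ w ∈ W) :
    ∃ W' : Submodule (LaurentSeries k) N, (∀ w ∈ W', φ w ∈ W') ∧ IsCompl W W' := by
  classical
  have hq : 2 ≤ p ^ e := by
    have hp2 : 2 ≤ p := (Fact.out : p.Prime).two_le
    calc 2 ≤ p := hp2
    _ = p ^ 1 := (pow_one p).symm
    _ ≤ p ^ e := Nat.pow_le_pow_right (by omega) (by omega)
  have hφ0 : φ 0 = 0 := by
    have h := hadd 0 0
    rw [add_zero] at h
    exact left_eq_add.mp h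
  have hφsub : ∀ x y, φ (x - y) = φ x - φ y := by
    intro x y
    have hneg : φ (-y) = -φ y := by
      have h := hadd y (-y)
      rw [add_neg_cancel, hφ0] at h
      exact (neg_eq_of_add_eq_zero_right h.symm).symm
    rw [sub_eq_add_neg, hadd, hneg, sub_eq_add_neg]
  -- Step 1 : φ '' W = W
  have hWeq : φ '' (W : Set N) = (W : Set N) := by
    set T : ℕ → Submodule (LaurentSeries k) N :=
      fun n => (imgSubmodule σ φ hadd hsmul)^[n] W with hT
    have hTsucc : ∀ n, T (n + 1) = imgSubmodule σ φ hadd hsmul (T n) := by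
      intro n
      simp only [hT]
      rw [Function.iterate_succ_apply']
    have hTcar : ∀ n, (T n : Set N) = φ^[n] '' (W : Set N) := by
      intro n
      induction n with
      | zero => simp [hT]
      | succ n ih =>
        rw [hTsucc n, imgSubmodule_coe, ih, Function.iterate_succ']
        rw [Set.image_comp]
    have himgmono : ∀ S S' : Submodule (LaurentSeries k) N, S ≤ S' →
        imgSubmodule σ φ hadd hsmul S ≤ imgSubmodule σ φ hadd hsmul S' := by
      intro S S' hss
      intro x hx
      obtain ⟨a, ha, rfl⟩ := hx
      exact ⟨a, hss ha, rfl⟩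
    have hTle : ∀ n, T (n + 1) ≤ T n := by
      intro n
      induction n with
      | zero =>
        rw [hTsucc 0]
        intro x hx
        obtain ⟨a, ha, rfl⟩ := hx
        exact hW a ha
      | succ n ih =>
        rw [hTsucc (n + 1)]
        refine le_trans (himgmono _ _ ih) ?_
        exact le_of_eq (hTsucc n).symm
    have hstab : ∃ n, T (n + 1) = T n := by
      by_contra hnot
      push_neg at hnot
      have hlt : ∀ n, Module.finrank (LaurentSeries k) (T (n + 1))
          < Module.finrank (LaurentSeries k) (T n) := by
        intro n
        exact Submodule.finrank_lt_finrank_of_lt (lt_of_le_of_ne (hTle n) (hnot n))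
      have hdec : ∀ n, Module.finrank (LaurentSeries k) (T n) + n
          ≤ Module.finrank (LaurentSeries k) (T 0) := by
        intro n
        induction n with
        | zero => omega
        | succ n ih =>
          have := hlt n
          omega
      have := hdec (Module.finrank (LaurentSeries k) (T 0) + 1)
      omega
    obtain ⟨n, hn⟩ := hstab
    have hsets : φ^[n] '' (φ '' (W : Set N)) = φ^[n] '' (W : Set N) := by
      have h1 : (T (n + 1) : Set N) = (T n : Set N) := by rw [hn]
      rw [hTcar (n + 1), hTcar n] at h1
      rw [← h1, Function.iterate_succ, Set.image_comp]
    exact Set.image_injective.mpr (hbij.injective.iterate n) hsets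
  have hWin : ∀ x : N, φ x ∈ W → x ∈ W := by
    intro x hx
    have hx2 : φ x ∈ φ '' (W : Set N) := by rw [hWeq]; exact hx
    obtain ⟨a, ha, hax⟩ := hx2
    rwa [← hbij.injective hax]
  -- Step 2 : the induced map on the quotient
  set mk : N →ₗ[LaurentSeries k] (N ⧸ W) := W.mkQ with hmk
  have hmks : Function.Surjective mk := W.mkQ_surjective
  set sinv : (N ⧸ W) → N := Function.surjInv hmks with hsinv
  have hsinv' : ∀ v : (N ⧸ W), mk (sinv v) = v := fun v => Function.surjInv_eq hmks v
  have hmkeq : ∀ x y : N, mk x = mk y ↔ x - y ∈ W := by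
    intro x y
    rw [hmk, Submodule.mkQ_apply, Submodule.mkQ_apply]
    exact Submodule.Quotient.eq W
  have hmk0 : ∀ x : N, mk x = 0 ↔ x ∈ W := by
    intro x
    rw [hmk, Submodule.mkQ_apply]
    exact Submodule.Quotient.mk_eq_zero W
  set φbar : (N ⧸ W) → (N ⧸ W) := fun v => mk (φ (sinv v)) with hφbar
  have hbar : ∀ x : N, φbar (mk x) = mk (φ x) := by
    intro x
    show mk (φ (sinv (mk x))) = mk (φ x)
    apply (hmkeq _ _).mpr
    rw [← hφsub]
    exact hW _ ((hmkeq _ _).mp (hsinv' (mk x)))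
  have hbaradd : ∀ u v : (N ⧸ W), φbar (u + v) = φbar u + φbar v := by
    intro u v
    obtain ⟨x, rfl⟩ := hmks u
    obtain ⟨y, rfl⟩ := hmks v
    rw [← map_add, hbar, hbar, hbar, hadd, map_add]
  have hbarsmul : ∀ (c : LaurentSeries k) (v : (N ⧸ W)), φbar (c • v) = σ c • φbar v := by
    intro c v
    obtain ⟨x, rfl⟩ := hmks v
    rw [← map_smul, hbar, hbar, hsmul, map_smul]
  have hbarsurj : Function.Surjective φbar := by
    intro v
    obtain ⟨x, rfl⟩ := hmks v
    obtain ⟨x', rfl⟩ := hbij.surjective x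
    exact ⟨mk x', hbar x'⟩
  have hbarinj : Function.Injective φbar := by
    intro u v huv
    obtain ⟨x, rfl⟩ := hmks u
    obtain ⟨y, rfl⟩ := hmks v
    rw [hbar, hbar] at huv
    have h1 := (hmkeq _ _).mp huv
    rw [← hφsub] at h1
    exact (hmkeq _ _).mpr (hWin _ h1)
  set φbarInv : (N ⧸ W) → (N ⧸ W) := Function.surjInv hbarsurj with hbarInvd
  have hbarInv : ∀ v : (N ⧸ W), φbar (φbarInv v) = v := fun v => Function.surjInv_eq hbarsurj v
  have hInvbar : ∀ v : (N ⧸ W), φbarInv (φbar v) = v := by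
    intro v
    apply hbarinj
    rw [hbarInv]
  have hbarInvadd : ∀ u v : (N ⧸ W), φbarInv (u + v) = φbarInv u + φbarInv v := by
    intro u v
    apply hbarinj
    rw [hbarInv, hbaradd, hbarInv, hbarInv]
  have hbarInvsmul : ∀ (c : LaurentSeries k) (v : (N ⧸ W)),
      φbarInv (c • v) = σ.symm c • φbarInv v := by
    intro c v
    apply hbarinj
    rw [hbarInv, hbarsmul, RingEquiv.apply_symm_apply, hbarInv]
  -- Step 3 : the Hom-space and its semilinear endomorphism
  obtain ⟨HW, hHWmem⟩ : ∃ HW : Submodule (LaurentSeries k) ((N ⧸ W) →ₗ[LaurentSeries k] N),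
      ∀ f : (N ⧸ W) →ₗ[LaurentSeries k] N, f ∈ HW ↔ ∀ v, f v ∈ W := by
    refine ⟨{ carrier := {f | ∀ v, f v ∈ W}
              add_mem' := ?_
              zero_mem' := ?_
              smul_mem' := ?_ }, fun f => Iff.rfl⟩
    · intro f g hf hg v
      rw [LinearMap.add_apply]
      exact W.add_mem (hf v) (hg v)
    · intro v
      rw [LinearMap.zero_apply]
      exact W.zero_mem
    · intro c f hf v
      rw [LinearMap.smul_apply]
      exact W.smul_mem c (hf v)
  obtain ⟨ψ, hψval⟩ : ∃ ψ : HW → HW, ∀ (f : HW) (v : N ⧸ W),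
      ((ψ f : (N ⧸ W) →ₗ[LaurentSeries k] N)) v = φ ((f : (N ⧸ W) →ₗ[LaurentSeries k] N) (φbarInv v)) := by
    refine ⟨fun f => ⟨{ toFun := fun v => φ ((f : (N ⧸ W) →ₗ[LaurentSeries k] N) (φbarInv v))
                        map_add' := ?_
                        map_smul' := ?_ },
      (hHWmem _).mpr (fun v => hW _ (((hHWmem _).mp f.2) (φbarInv v)))⟩, fun f v => rfl⟩
    · intro u v
      rw [hbarInvadd, map_add, hadd]
    · intro c v
      rw [hbarInvsmul, map_smul, hsmul, RingEquiv.apply_symm_apply, RingHom.id_apply]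
  -- Step 4 : the obstruction class G
  obtain ⟨s, hs⟩ := (W.mkQ).exists_rightInverse_of_surjective W.range_mkQ
  have hs' : ∀ v : N ⧸ W, mk (s v) = v := by
    intro v
    exact LinearMap.congr_fun hs v
  have hδW : ∀ v : N ⧸ W, φ (s v) - s (φbar v) ∈ W := by
    intro v
    apply (hmk0 _).mp
    rw [map_sub, ← hbar, hs', hs', sub_self]
  obtain ⟨G, hGval⟩ : ∃ G : HW, ∀ v : N ⧸ W,
      ((G : (N ⧸ W) →ₗ[LaurentSeries k] N)) v = φ (s (φbarInv v)) - s (φbar (φbarInv v)) := by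
    refine ⟨⟨{ toFun := fun v => φ (s (φbarInv v)) - s (φbar (φbarInv v))
               map_add' := ?_
               map_smul' := ?_ },
      (hHWmem _).mpr (fun v => hδW (φbarInv v))⟩, fun v => rfl⟩
    · intro u v
      rw [hbarInvadd, map_add, hadd, hbaradd, map_add]
      abel
    · intro c v
      rw [hbarInvsmul, map_smul, hsmul, hbarsmul, map_smul, RingEquiv.apply_symm_apply,
        smul_sub, RingHom.id_apply]
  have hψadd : ∀ f g : HW, ψ (f + g) = ψ f + ψ g := by
    intro f g
    apply Subtype.ext
    apply LinearMap.ext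
    intro v
    have h1 : ((ψ (f + g) : (N ⧸ W) →ₗ[LaurentSeries k] N)) v
        = φ (((f + g : HW) : (N ⧸ W) →ₗ[LaurentSeries k] N) (φbarInv v)) := hψval _ _
    rw [h1]
    have h2 : ((ψ f + ψ g : HW) : (N ⧸ W) →ₗ[LaurentSeries k] N) v
        = ((ψ f : (N ⧸ W) →ₗ[LaurentSeries k] N)) v + ((ψ g : (N ⧸ W) →ₗ[LaurentSeries k] N)) v := rfl
    rw [h2, hψval f v, hψval g v]
    have h3 : ((f + g : HW) : (N ⧸ W) →ₗ[LaurentSeries k] N) (φbarInv v)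
        = (f : (N ⧸ W) →ₗ[LaurentSeries k] N) (φbarInv v)
          + (g : (N ⧸ W) →ₗ[LaurentSeries k] N) (φbarInv v) := rfl
    rw [h3, hadd]
  have hψsmul : ∀ (c : LaurentSeries k) (f : HW), ψ (c • f) = σ c • ψ f := by
    intro c f
    apply Subtype.ext
    apply LinearMap.ext
    intro v
    have h1 : ((ψ (c • f) : (N ⧸ W) →ₗ[LaurentSeries k] N)) v
        = φ (((c • f : HW) : (N ⧸ W) →ₗ[LaurentSeries k] N) (φbarInv v)) := hψval _ _
    rw [h1]
    have h2 : ((σ c • ψ f : HW) : (N ⧸ W) →ₗ[LaurentSeries k] N) v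
        = σ c • ((ψ f : (N ⧸ W) →ₗ[LaurentSeries k] N)) v := rfl
    rw [h2, hψval f v]
    have h3 : ((c • f : HW) : (N ⧸ W) →ₗ[LaurentSeries k] N) (φbarInv v)
        = c • (f : (N ⧸ W) →ₗ[LaurentSeries k] N) (φbarInv v) := rfl
    rw [h3, hsmul]
  obtain ⟨F, hF⟩ := psi_sub_one_surj (p ^ e) hq σ hσ HW ψ hψadd hψsmul (-G)
  -- Step 5 : the complement
  have hkey : ∀ u : N ⧸ W,
      φ ((F : (N ⧸ W) →ₗ[LaurentSeries k] N) u)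
        - (F : (N ⧸ W) →ₗ[LaurentSeries k] N) (φbar u)
        = -(φ (s u) - s (φbar u)) := by
    intro u
    have h1 := congrArg (Subtype.val) hF
    have h2 := LinearMap.congr_fun
      (show ((ψ F - F : HW) : (N ⧸ W) →ₗ[LaurentSeries k] N)
          = ((-G : HW) : (N ⧸ W) →ₗ[LaurentSeries k] N) from h1) (φbar u)
    have h3 : ((ψ F - F : HW) : (N ⧸ W) →ₗ[LaurentSeries k] N) (φbar u)
        = ((ψ F : (N ⧸ W) →ₗ[LaurentSeries k] N)) (φbar u)
          - ((F : (N ⧸ W) →ₗ[LaurentSeries k] N)) (φbar u) := rfl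
    have h4 : ((-G : HW) : (N ⧸ W) →ₗ[LaurentSeries k] N) (φbar u)
        = -(((G : (N ⧸ W) →ₗ[LaurentSeries k] N)) (φbar u)) := rfl
    rw [h3, h4, hψval F (φbar u), hGval (φbar u), hInvbar u] at h2
    exact h2
  set s' : (N ⧸ W) →ₗ[LaurentSeries k] N := s + (F : (N ⧸ W) →ₗ[LaurentSeries k] N) with hs'def
  have hs'app : ∀ v : N ⧸ W, s' v = s v + (F : (N ⧸ W) →ₗ[LaurentSeries k] N) v := fun v => rfl
  have hFW : ∀ v : N ⧸ W, (F : (N ⧸ W) →ₗ[LaurentSeries k] N) v ∈ W :=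
    (hHWmem _).mp F.2
  have hs'mk : ∀ v : N ⧸ W, mk (s' v) = v := by
    intro v
    rw [hs'app, map_add, hs']
    rw [(hmk0 _).mpr (hFW v), add_zero]
  have hs'φ : ∀ u : N ⧸ W, φ (s' u) = s' (φbar u) := by
    intro u
    have h2 := hkey u
    rw [sub_eq_iff_eq_add] at h2
    rw [hs'app, hs'app, hadd, h2]
    abel
  refine ⟨LinearMap.range s', ?_, ?_⟩
  · rintro w ⟨u, rfl⟩
    exact ⟨φbar u, (hs'φ u).symm⟩
  · constructor
    · rw [disjoint_iff]
      rw [Submodule.eq_bot_iff]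
      rintro x ⟨hxW, u, rfl⟩
      have h0 : u = 0 := by
        have hh := hs'mk u
        rw [show mk (s' u) = 0 from (hmk0 _).mpr hxW] at hh
        exact hh.symm
      rw [h0, map_zero]
    · rw [codisjoint_iff, eq_top_iff]
      intro x _
      apply Submodule.mem_sup.mpr
      refine ⟨x - s' (mk x), ?_, s' (mk x), ⟨mk x, rfl⟩, by abel⟩
      apply (hmk0 _).mp
      rw [map_sub, hs'mk, sub_self]

end
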